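/- Let k ≥ 1 be an integer, s > 1 a real number, and L a real number with 0 ≤ L ≤ s, and let r(x) = (x^{1/k}·(x + (1-x)·(1 - L/s²)) + (1-x)·(1/s))^k be the RLBSBF iteration map with load L. Then for every real x with 0 ≤ x < 1 one has r(x) > x, and r(1) = 1. -/
import Mathlib


/-- **RLBSBF strict progress.** For the RLBSBF iteration map with load `L`,
`r x = (x^(1/k) * (x + (1-x)*(1 - L/s²)) + (1-x)*(1/s))^k`, where `k ≥ 1`, `s > 1`
and `0 ≤ L ≤ s`, for every `0 ≤ x < 1` one has `r x > x`, and `r 1 = 1`. -/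
theorem rlbsbf_strict_progress (k : ℕ) (hk : 1 ≤ k) (s : ℝ) (hs : 1 < s)
    (L : ℝ) (hL0 : 0 ≤ L) (hLs : L ≤ s)
    (r : ℝ → ℝ)
    (hr : ∀ x : ℝ,
      r x = (x ^ ((1 : ℝ) / k) * (x + (1 - x) * (1 - L / s ^ 2))
        + (1 - x) * (1 / s)) ^ k) :
    (∀ x : ℝ, 0 ≤ x → x < 1 → r x > x) ∧ r 1 = 1 := by
  have hs0 : (0 : ℝ) < s := lt_trans one_pos hs
  have hkR : ((k : ℝ)) ≠ 0 := by positivity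
  constructor
  · intro x hx0 hx1
    rw [hr x]
    set y : ℝ := x ^ ((1 : ℝ) / k) with hy
    have hy0 : 0 ≤ y := Real.rpow_nonneg hx0 _
    have hy1 : y < 1 := by
      rcases eq_or_lt_of_le hx0 with h | h
      · rw [hy, ← h, Real.zero_rpow (by positivity)]; norm_num
      · calc y < 1 ^ ((1:ℝ)/k) := Real.rpow_lt_rpow hx0 hx1 (by positivity)
          _ = 1 := Real.one_rpow _
    have hyk : y ^ k = x := by
      rw [hy, ← Real.rpow_natCast (x ^ ((1:ℝ)/k)) k, ← Real.rpow_mul hx0,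
        one_div_mul_cancel hkR, Real.rpow_one]
    -- base comparison
    have hbase : y < y * (x + (1 - x) * (1 - L / s ^ 2)) + (1 - x) * (1 / s) := by
      have hdiff : y * (x + (1 - x) * (1 - L / s ^ 2)) + (1 - x) * (1 / s) - y
          = (1 - x) * (s - y * L) / s ^ 2 := by
        have hxy : y * x + y * (1 - x) = y := by ring
        field_simp
        nlinarith [hxy]
      have hpos : 0 < (1 - x) * (s - y * L) / s ^ 2 := by
        have h1 : y * L ≤ 1 * s := mul_le_mul hy1.le hLs hL0 one_pos.le
        have h2 : 0 < s - y * L := by nlinarith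
        have h3 : 0 < 1 - x := by linarith
        positivity
      linarith [hdiff ▸ hpos]
    calc x = y ^ k := hyk.symm
      _ < (y * (x + (1 - x) * (1 - L / s ^ 2)) + (1 - x) * (1 / s)) ^ k :=
        pow_lt_pow_left₀ hbase hy0 (by omega)
  · rw [hr 1]
    simp
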